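/- arXiv:1409.4676 — 7 statements merged into one kernel-verified Lean document; each statement's English description precedes it below -/
import Mathlib

section
/- Let M > 0 and sh > 0 be real numbers, set θ_c = 1 + (M·coth M − 1)/sh, and define a : (0,1] → ℝ by a(y) = sinh(M·y) / (θ_c · y · sinh M). Then θ_c > 1; a satisfies a''(y) + (2/y)·a'(y) = M²·a(y) for all y ∈ (0,1); a(1) = 1/θ_c; and a satisfies the external mass transfer (Robin) boundary condition a'(1) = sh·(1 − a(1)). -/
open Real Set Filter

lemma sinh_lt_mul_cosh {M : ℝ} (hM : 0 < M) : Real.sinh M < M * Real.cosh M := by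
  have h : StrictMonoOn (fun x : ℝ => x * Real.cosh x - Real.sinh x) (Set.Ici 0) := by
    apply strictMonoOn_of_deriv_pos (convex_Ici 0)
    · exact (Continuous.sub (continuous_id.mul Real.continuous_cosh) Real.continuous_sinh).continuousOn
    · intro x hx
      rw [interior_Ici] at hx
      have hd : HasDerivAt (fun x : ℝ => x * Real.cosh x - Real.sinh x)
          (1 * Real.cosh x + x * Real.sinh x - Real.cosh x) x :=
        ((hasDerivAt_id x).mul (Real.hasDerivAt_cosh x)).sub (Real.hasDerivAt_sinh x)
      rw [hd.deriv]
      have : (0:ℝ) < x * Real.sinh x := mul_pos hx (Real.sinh_pos_iff.mpr hx)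
      linarith
  have := h (Set.self_mem_Ici) (le_of_lt hM : (0:ℝ) ≤ M) hM
  simpa using this

/-- Quantized-method first-stage concentration profile for the grain model in a
spherical pellet with external mass transfer resistance (Robin boundary
condition), where `coth M = cosh M / sinh M`. -/
theorem stmt1 (M sh : ℝ) (hM : 0 < M) (hsh : 0 < sh)
    (θc : ℝ) (hθc : θc = 1 + (M * (Real.cosh M / Real.sinh M) - 1) / sh)
    (a : ℝ → ℝ) (ha : ∀ y, a y = Real.sinh (M * y) / (θc * y * Real.sinh M)) :
    1 < θc ∧
    (∀ y ∈ Set.Ioo (0:ℝ) 1,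
      deriv (deriv a) y + (2 / y) * deriv a y = M ^ 2 * a y) ∧
    a 1 = 1 / θc ∧
    deriv a 1 = sh * (1 - a 1) := by
  have hS : 0 < Real.sinh M := Real.sinh_pos_iff.mpr hM
  have hkey : Real.sinh M < M * Real.cosh M := sinh_lt_mul_cosh hM
  have hθ1 : 1 < θc := by
    rw [hθc]
    have h1 : 0 < M * (Real.cosh M / Real.sinh M) - 1 := by
      rw [mul_div_assoc'] at *
      rw [sub_pos, lt_div_iff₀ hS]
      linarith
    have := div_pos h1 hsh
    linarith
  have hθ0 : θc ≠ 0 := by linarith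
  have hSne : Real.sinh M ≠ 0 := ne_of_gt hS
  have haf : a = fun y => Real.sinh (M * y) / (θc * y * Real.sinh M) := funext ha
  -- first derivative
  have hD : ∀ y : ℝ, y ≠ 0 → HasDerivAt a
      ((Real.cosh (M * y) * M * (θc * y * Real.sinh M) -
        Real.sinh (M * y) * (θc * Real.sinh M)) / (θc * y * Real.sinh M) ^ 2) y := by
    intro y hy
    rw [haf]
    have hnum : HasDerivAt (fun y => Real.sinh (M * y)) (Real.cosh (M * y) * M) y := by
      simpa using HasDerivAt.sinh ((hasDerivAt_id y).const_mul M)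
    have hden : HasDerivAt (fun y => θc * y * Real.sinh M) (θc * Real.sinh M) y := by
      simpa using ((hasDerivAt_id y).const_mul θc).mul_const (Real.sinh M)
    exact hnum.div hden (by simp [hθ0, hy, hSne])
  refine ⟨hθ1, ?_, ?_, ?_⟩
  · intro y hy
    obtain ⟨hy0, hy1⟩ := hy
    have hyne : y ≠ 0 := ne_of_gt hy0
    -- deriv a equals explicit formula near y
    set F : ℝ → ℝ := fun y =>
      (Real.cosh (M * y) * M * (θc * y * Real.sinh M) -
        Real.sinh (M * y) * (θc * Real.sinh M)) / (θc * y * Real.sinh M) ^ 2 with hF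
    have hev : deriv a =ᶠ[nhds y] F := by
      filter_upwards [eventually_ne_nhds hyne] with z hz
      exact (hD z hz).deriv
    have hda : deriv a y = F y := (hD y hyne).deriv
    -- derivative of F at y
    have hnum2 : HasDerivAt (fun y => Real.cosh (M * y) * M * (θc * y * Real.sinh M) -
        Real.sinh (M * y) * (θc * Real.sinh M))
        ((Real.sinh (M * y) * M * M) * (θc * y * Real.sinh M)
          + Real.cosh (M * y) * M * (θc * Real.sinh M)
          - Real.cosh (M * y) * M * (θc * Real.sinh M)) y := by
      have h1 : HasDerivAt (fun y => Real.cosh (M * y) * M) (Real.sinh (M * y) * M * M) y := by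
        simpa using (HasDerivAt.cosh ((hasDerivAt_id y).const_mul M)).mul_const M
      have h2 : HasDerivAt (fun y => θc * y * Real.sinh M) (θc * Real.sinh M) y := by
        simpa using ((hasDerivAt_id y).const_mul θc).mul_const (Real.sinh M)
      have h3 : HasDerivAt (fun y => Real.sinh (M * y) * (θc * Real.sinh M))
          ((Real.cosh (M * y) * M) * (θc * Real.sinh M)) y := by
        simpa [mul_comm, mul_assoc] using
          (HasDerivAt.sinh ((hasDerivAt_id y).const_mul M)).mul_const (θc * Real.sinh M)
      exact (h1.mul h2).sub h3
    have hden2 : HasDerivAt (fun y => (θc * y * Real.sinh M) ^ 2)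
        (2 * (θc * y * Real.sinh M) * (θc * Real.sinh M)) y := by
      have h2 : HasDerivAt (fun y => θc * y * Real.sinh M) (θc * Real.sinh M) y := by
        simpa using ((hasDerivAt_id y).const_mul θc).mul_const (Real.sinh M)
      exact (h2.fun_pow 2).congr_deriv (by simp only [Nat.cast_ofNat, show (2:ℕ) - 1 = 1 from rfl, pow_one])
    have hdF : HasDerivAt F
        ((((Real.sinh (M * y) * M * M) * (θc * y * Real.sinh M)
          + Real.cosh (M * y) * M * (θc * Real.sinh M)
          - Real.cosh (M * y) * M * (θc * Real.sinh M)) * (θc * y * Real.sinh M) ^ 2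
         - (Real.cosh (M * y) * M * (θc * y * Real.sinh M) -
        Real.sinh (M * y) * (θc * Real.sinh M)) * (2 * (θc * y * Real.sinh M) * (θc * Real.sinh M)))
          / ((θc * y * Real.sinh M) ^ 2) ^ 2) y :=
      hnum2.div hden2 (by positivity)
    have h2nd : deriv (deriv a) y = _ := hev.deriv_eq.trans hdF.deriv
    rw [h2nd, hda, ha y, hF]
    field_simp
    ring
  · rw [ha 1]
    field_simp
  · have h := (hD 1 one_ne_zero).deriv
    have key : sh * (θc - 1) * Real.sinh M = M * Real.cosh M - Real.sinh M := by
      rw [hθc]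
      field_simp
      ring
    rw [h, ha 1]
    rw [div_eq_iff (by positivity), mul_one, mul_one]
    field_simp
    linear_combination (-1) * key
end

section
/- Let M > 0, sh > 0 and y_m ∈ (0,1) be real numbers. Set K = M·y_m·coth(M·y_m) − 1, P = 1 − y_m + y_m/sh, and A = 1/(1 + P·K). Define a₁(y) = A·(y_m/(P·y))·(1 − y + y/sh) + (1 − y_m/y)/P for y ∈ [y_m, 1], and a₂(y) = A·y_m·sinh(M·y)/(y·sinh(M·y_m)) for y ∈ (0, y_m]. Then K > 0; a₁''(y) + (2/y)·a₁'(y) = 0 on (y_m, 1); a₂''(y) + (2/y)·a₂'(y) = M²·a₂(y) on (0, y_m); a₁'(1) = sh·(1 − a₁(1)); a₁(y_m) = a₂(y_m) = A; and a₁'(y_m) = a₂'(y_m). -/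
open Real Set

lemma flux_aux (M ym s P K A : ℝ) (hM : M ≠ 0) (hym : ym ≠ 0) (hs : s ≠ 0)
    (hP : P ≠ 0) :
    ym * -(A * (P * K)) / P * -(ym ^ 2)⁻¹
      = A * ym / s * ((K + 1) * s / (M * ym) * M * ym⁻¹ + s * -(ym ^ 2)⁻¹) := by
  field_simp
  ring

lemma sinh_lt_self_mul_cosh {x : ℝ} (hx : 0 < x) :
    Real.sinh x < x * Real.cosh x := by
  have h : StrictMonoOn (fun y => y * Real.cosh y - Real.sinh y) (Set.Ici 0) := by
    apply strictMonoOn_of_deriv_pos (convex_Ici 0)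
    · fun_prop
    · intro y hy
      rw [interior_Ici] at hy
      have hd : HasDerivAt (fun y => y * Real.cosh y - Real.sinh y)
          (1 * Real.cosh y + y * Real.sinh y - Real.cosh y) y :=
        ((hasDerivAt_id y).mul (Real.hasDerivAt_cosh y)).sub (Real.hasDerivAt_sinh y)
      rw [hd.deriv]
      have hy' : (0:ℝ) < y := hy
      have hsy : 0 < Real.sinh y := Real.sinh_pos_iff.2 hy'
      nlinarith [mul_pos hy' hsy]
  have := h Set.self_mem_Ici (le_of_lt hx) hx
  simpa using this

/-- Quantized-method second-stage (moving boundary) concentration profile for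
the grain model in a spherical pellet with external mass transfer resistance,
where `coth x = cosh x / sinh x`. -/
theorem stmt3 (M sh ym : ℝ) (hM : 0 < M) (hsh : 0 < sh)
    (hym : ym ∈ Set.Ioo (0:ℝ) 1)
    (K P A : ℝ)
    (hK : K = M * ym * (Real.cosh (M * ym) / Real.sinh (M * ym)) - 1)
    (hP : P = 1 - ym + ym / sh)
    (hA : A = 1 / (1 + P * K))
    (a₁ a₂ : ℝ → ℝ)
    (ha₁ : ∀ y, a₁ y = A * (ym / (P * y)) * (1 - y + y / sh) + (1 - ym / y) / P)
    (ha₂ : ∀ y, a₂ y = A * ym * Real.sinh (M * y) / (y * Real.sinh (M * ym))) :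
    0 < K ∧
    (∀ y ∈ Set.Ioo ym 1, deriv (deriv a₁) y + (2 / y) * deriv a₁ y = 0) ∧
    (∀ y ∈ Set.Ioo (0:ℝ) ym,
      deriv (deriv a₂) y + (2 / y) * deriv a₂ y = M ^ 2 * a₂ y) ∧
    deriv a₁ 1 = sh * (1 - a₁ 1) ∧
    (a₁ ym = A ∧ a₂ ym = A) ∧
    deriv a₁ ym = deriv a₂ ym := by
  obtain ⟨hym0, hym1⟩ := hym
  have hym0' : ym ≠ 0 := ne_of_gt hym0
  have hsh' : sh ≠ 0 := ne_of_gt hsh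
  have hPpos : 0 < P := by
    have h1 : 0 < ym / sh := div_pos hym0 hsh
    rw [hP]; linarith
  have hP0 : P ≠ 0 := ne_of_gt hPpos
  have hx : 0 < M * ym := mul_pos hM hym0
  have hs : 0 < Real.sinh (M * ym) := Real.sinh_pos_iff.2 hx
  have hs' : Real.sinh (M * ym) ≠ 0 := ne_of_gt hs
  -- K > 0
  have hKpos : 0 < K := by
    have h := sinh_lt_self_mul_cosh hx
    have h2 : 1 < M * ym * (Real.cosh (M * ym) / Real.sinh (M * ym)) := by
      rw [← mul_div_assoc]
      exact (one_lt_div hs).2 h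
    rw [hK]; linarith
  have hden : 0 < 1 + P * K := by positivity
  have hQpos : 0 < ym - ym * sh + sh := by nlinarith
  have hQ : ym - ym * sh + sh ≠ 0 := ne_of_gt hQpos
  have hQ2 : sh + ym - ym * sh ≠ 0 := by intro h; apply hQ; linarith
  have h1A : 1 - A = A * (P * K) := by rw [hA]; field_simp; ring
  have hden0 : 1 + P * K ≠ 0 := ne_of_gt hden
  have hM' : M ≠ 0 := ne_of_gt hM
  have hP2 : P * sh = sh - sh * ym + ym := by rw [hP]; field_simp
  -- closed form for a₁ on Ioi 0
  obtain ⟨α, hα⟩ : ∃ α : ℝ, α = ym * (A - 1) / P := ⟨_, rfl⟩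
  obtain ⟨β, hβ⟩ : ∃ β : ℝ, β = A * ym * (1 / sh - 1) / P + 1 / P := ⟨_, rfl⟩
  have key1 : ∀ y ∈ Set.Ioi (0:ℝ), a₁ y = α * y⁻¹ + β := by
    intro y hy
    have hy0 : y ≠ 0 := ne_of_gt hy
    rw [ha₁, hα, hβ]
    field_simp
    ring
  have hg1 : ∀ y : ℝ, y ≠ 0 →
      HasDerivAt (fun y => α * y⁻¹ + β) (α * (-(y ^ 2)⁻¹)) y := by
    intro y hy
    exact ((hasDerivAt_inv hy).const_mul α).add_const β
  have hda1 : ∀ y ∈ Set.Ioi (0:ℝ), deriv a₁ y = α * (-(y ^ 2)⁻¹) := by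
    intro y hy
    have hev : a₁ =ᶠ[nhds y] fun y => α * y⁻¹ + β :=
      Filter.eventuallyEq_of_mem (Ioi_mem_nhds hy) key1
    rw [hev.deriv_eq, (hg1 y (ne_of_gt hy)).deriv]
  -- closed form for a₂ on Ioi 0
  obtain ⟨C, hC⟩ : ∃ C : ℝ, C = A * ym / Real.sinh (M * ym) := ⟨_, rfl⟩
  have key2 : ∀ y ∈ Set.Ioi (0:ℝ), a₂ y = C * (Real.sinh (M * y) * y⁻¹) := by
    intro y hy
    have hy0 : y ≠ 0 := ne_of_gt hy
    rw [ha₂, hC]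
    field_simp
  have hsinhc : ∀ y : ℝ, HasDerivAt (fun y => Real.sinh (M * y))
      (Real.cosh (M * y) * M) y := by
    intro y
    simpa [Function.comp_def] using (Real.hasDerivAt_sinh (M * y)).comp y ((hasDerivAt_id y).const_mul M)
  have hcoshc : ∀ y : ℝ, HasDerivAt (fun y => Real.cosh (M * y))
      (Real.sinh (M * y) * M) y := by
    intro y
    simpa [Function.comp_def] using (Real.hasDerivAt_cosh (M * y)).comp y ((hasDerivAt_id y).const_mul M)
  have hg2 : ∀ y : ℝ, y ≠ 0 →
      HasDerivAt (fun y => C * (Real.sinh (M * y) * y⁻¹))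
        (C * (Real.cosh (M * y) * M * y⁻¹ + Real.sinh (M * y) * (-(y ^ 2)⁻¹))) y := by
    intro y hy
    exact ((hsinhc y).mul (hasDerivAt_inv hy)).const_mul C
  have hda2 : ∀ y ∈ Set.Ioi (0:ℝ), deriv a₂ y
      = C * (Real.cosh (M * y) * M * y⁻¹ + Real.sinh (M * y) * (-(y ^ 2)⁻¹)) := by
    intro y hy
    have hev : a₂ =ᶠ[nhds y] fun y => C * (Real.sinh (M * y) * y⁻¹) :=
      Filter.eventuallyEq_of_mem (Ioi_mem_nhds hy) key2
    rw [hev.deriv_eq, (hg2 y (ne_of_gt hy)).deriv]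
  refine ⟨hKpos, ?_, ?_, ?_, ⟨?_, ?_⟩, ?_⟩
  · -- ODE for a₁
    intro y hy
    have hy0 : 0 < y := lt_trans hym0 hy.1
    have hy0' : y ≠ 0 := ne_of_gt hy0
    have hev : deriv a₁ =ᶠ[nhds y] fun y => -α * (y ^ 2)⁻¹ := by
      refine Filter.eventuallyEq_of_mem (Ioi_mem_nhds hy0) ?_
      intro z hz
      rw [hda1 z hz]; ring
    have hd : HasDerivAt (fun y => -α * (y ^ 2)⁻¹)
        (-α * (-(↑2 * y ^ (2 - 1)) / (y ^ 2) ^ 2)) y :=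
      ((hasDerivAt_pow 2 y).inv (pow_ne_zero 2 hy0')).const_mul (-α)
    rw [hev.deriv_eq, hd.deriv, hda1 y (Set.mem_Ioi.2 hy0)]
    field_simp
    ring
  · -- ODE for a₂
    intro y hy
    have hy0 : 0 < y := hy.1
    have hy0' : y ≠ 0 := ne_of_gt hy0
    have hev : deriv a₂ =ᶠ[nhds y] fun y =>
        C * (Real.cosh (M * y) * M * y⁻¹ + Real.sinh (M * y) * -((y ^ 2)⁻¹)) := by
      refine Filter.eventuallyEq_of_mem (Ioi_mem_nhds hy0) ?_
      intro z hz
      rw [hda2 z hz]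
    have hd1 : HasDerivAt (fun y => Real.cosh (M * y) * M * y⁻¹)
        (Real.sinh (M * y) * M * M * y⁻¹ + Real.cosh (M * y) * M * (-(y ^ 2)⁻¹)) y :=
      ((hcoshc y).mul_const M).mul (hasDerivAt_inv hy0')
    have hd2 : HasDerivAt (fun y => Real.sinh (M * y) * -((y ^ 2)⁻¹))
        (Real.cosh (M * y) * M * -((y ^ 2)⁻¹)
          + Real.sinh (M * y) * -(-(↑2 * y ^ (2 - 1)) / (y ^ 2) ^ 2)) y :=
      (hsinhc y).mul (((hasDerivAt_pow 2 y).inv (pow_ne_zero 2 hy0')).neg)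
    have hd : HasDerivAt (fun y =>
        C * (Real.cosh (M * y) * M * y⁻¹ + Real.sinh (M * y) * -((y ^ 2)⁻¹)))
        (C * ((Real.sinh (M * y) * M * M * y⁻¹ + Real.cosh (M * y) * M * (-(y ^ 2)⁻¹))
          + (Real.cosh (M * y) * M * -((y ^ 2)⁻¹)
            + Real.sinh (M * y) * -(-(↑2 * y ^ (2 - 1)) / (y ^ 2) ^ 2)))) y :=
      (hd1.add hd2).const_mul C
    rw [hev.deriv_eq, hd.deriv, hda2 y (Set.mem_Ioi.2 hy0),
      key2 y (Set.mem_Ioi.2 hy0)]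
    field_simp
    ring
  · -- Robin condition at 1
    have h1 : (1:ℝ) ∈ Set.Ioi (0:ℝ) := by norm_num
    rw [hda1 1 h1, key1 1 h1, hα, hβ]
    field_simp
    linear_combination (-1) * hP2
  · -- a₁ ym = A
    rw [key1 ym (Set.mem_Ioi.2 hym0), hα, hβ]
    field_simp
    linear_combination (-A) * hP2
  · -- a₂ ym = A
    rw [ha₂]
    field_simp
  · -- flux matching at ym
    have hcosh : Real.cosh (M * ym) = (K + 1) * Real.sinh (M * ym) / (M * ym) := by
      rw [hK]
      field_simp
      ring
    rw [hda1 ym (Set.mem_Ioi.2 hym0), hda2 ym (Set.mem_Ioi.2 hym0), hcosh, hα, hC,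
      show A - 1 = -(A * (P * K)) from by linarith]
    exact flux_aux M ym _ P K A hM' hym0' hs' hP0
end

section
/- Let a > 0, σ ≥ 0 and Z > 0 with Z ≠ 1 be real constants, let T > 0, and suppose r : [0, T] → (0, 1] is differentiable with r(0) = 1 and r'(θ) = −a / (1 + 6σ²·(r(θ) − r(θ)²/(Z + (1 − Z)·r(θ)³)^{1/3})) for all θ ∈ [0, T]. Then Z + (1 − Z)·r(θ)³ > 0 for all θ ∈ [0, T], and for all θ ∈ [0, T]: r(θ) + 3σ²·r(θ)² + (3σ²/(Z − 1))·(Z + (1 − Z)·r(θ)³)^{2/3} = 1 + 3σ² + 3σ²/(Z − 1) − a·θ. -/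
open Real Set

/-- Modified grain model (grain model with structural changes): the implicit
integrated form of the kinetic law
`r' = -a / (1 + 6σ²(r - r²/(Z + (1-Z)r³)^(1/3)))`, `r 0 = 1`. -/
theorem stmt7 (a σ Z T : ℝ) (ha : 0 < a) (hσ : 0 ≤ σ) (hZ : 0 < Z)
    (hZ1 : Z ≠ 1) (hT : 0 < T)
    (r : ℝ → ℝ)
    (hrange : ∀ θ ∈ Set.Icc (0:ℝ) T, r θ ∈ Set.Ioc (0:ℝ) 1)
    (hr0 : r 0 = 1)
    (hderiv : ∀ θ ∈ Set.Icc (0:ℝ) T,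
      HasDerivAt r
        (-a / (1 + 6 * σ ^ 2 *
          (r θ - (r θ) ^ 2 / (Z + (1 - Z) * (r θ) ^ 3) ^ ((1:ℝ) / 3)))) θ) :
    (∀ θ ∈ Set.Icc (0:ℝ) T, 0 < Z + (1 - Z) * (r θ) ^ 3) ∧
    (∀ θ ∈ Set.Icc (0:ℝ) T,
      r θ + 3 * σ ^ 2 * (r θ) ^ 2
        + (3 * σ ^ 2 / (Z - 1)) * (Z + (1 - Z) * (r θ) ^ 3) ^ ((2:ℝ) / 3)
        = 1 + 3 * σ ^ 2 + 3 * σ ^ 2 / (Z - 1) - a * θ) := by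
  have hu : ∀ θ ∈ Set.Icc (0:ℝ) T, 0 < Z + (1 - Z) * (r θ) ^ 3 := by
    intro θ hθ
    obtain ⟨h1, h2⟩ := hrange θ hθ
    have h3 : (r θ) ^ 3 ≤ 1 := pow_le_one₀ (n := 3) h1.le h2
    nlinarith [pow_pos h1 3, mul_nonneg hZ.le (sub_nonneg.2 h3)]
  refine ⟨hu, ?_⟩
  set c : ℝ := 3 * σ ^ 2 / (Z - 1) with hc
  set F : ℝ → ℝ := fun t =>
    r t + 3 * σ ^ 2 * (r t) ^ 2 + c * (Z + (1 - Z) * (r t) ^ 3) ^ ((2:ℝ)/3) + a * t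
    with hF
  -- derivative of F is 0 on Icc
  have key : ∀ θ ∈ Set.Icc (0:ℝ) T, HasDerivAt F 0 θ := by
    intro θ hθ
    obtain ⟨h1, h2⟩ := hrange θ hθ
    have huθ := hu θ hθ
    set R := r θ with hR
    set u := Z + (1 - Z) * R ^ 3 with hud
    set w := u ^ ((1:ℝ)/3) with hw
    have hwpos : 0 < w := Real.rpow_pos_of_pos huθ _
    -- R ≤ w
    have hRw : R ≤ w := by
      have h3 : R ^ 3 ≤ u := by
        have h4 : R ^ 3 ≤ 1 := pow_le_one₀ (n := 3) h1.le h2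
        nlinarith [mul_nonneg hZ.le (sub_nonneg.2 h4)]
      calc R = (R ^ 3) ^ ((1:ℝ)/3) := by
              rw [← Real.rpow_natCast R 3, ← Real.rpow_mul h1.le]
              norm_num
        _ ≤ w := Real.rpow_le_rpow (by positivity) h3 (by norm_num)
    set D : ℝ := 1 + 6 * σ ^ 2 * (R - R ^ 2 / w) with hD
    have hDpos : 0 < D := by
      have : R ^ 2 / w ≤ R := by
        rw [div_le_iff₀ hwpos]
        nlinarith
      have : 0 ≤ R - R ^ 2 / w := by linarith
      have := mul_nonneg (by positivity : (0:ℝ) ≤ 6 * σ ^ 2) this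
      simp only [hD]; linarith
    have hr' : HasDerivAt r (-a / D) θ := hderiv θ hθ
    have h2' : HasDerivAt (fun t => (r t) ^ 2) ((2:ℕ) * R ^ 1 * (-a / D)) θ := hr'.pow 2
    have h3' : HasDerivAt (fun t => Z + (1 - Z) * (r t) ^ 3)
        ((1 - Z) * ((3:ℕ) * R ^ 2 * (-a / D))) θ :=
      ((hr'.pow 3).const_mul (1 - Z)).const_add Z
    have h4 : HasDerivAt (fun t => (Z + (1 - Z) * (r t) ^ 3) ^ ((2:ℝ)/3))
        (((1 - Z) * ((3:ℕ) * R ^ 2 * (-a / D))) * ((2:ℝ)/3) * u ^ ((2:ℝ)/3 - 1)) θ :=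
      h3'.rpow_const (Or.inl huθ.ne')
    have hsum : HasDerivAt F
        ((-a / D) + 3 * σ ^ 2 * ((2:ℕ) * R ^ 1 * (-a / D))
          + c * (((1 - Z) * ((3:ℕ) * R ^ 2 * (-a / D))) * ((2:ℝ)/3) * u ^ ((2:ℝ)/3 - 1))
          + a * 1) θ := by
      exact ((hr'.add (h2'.const_mul (3 * σ ^ 2))).add (h4.const_mul c)).add
        ((hasDerivAt_id θ).const_mul a)
    have hval : (-a / D) + 3 * σ ^ 2 * ((2:ℕ) * R ^ 1 * (-a / D))
          + c * (((1 - Z) * ((3:ℕ) * R ^ 2 * (-a / D))) * ((2:ℝ)/3) * u ^ ((2:ℝ)/3 - 1))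
          + a * 1 = 0 := by
      have hum : u ^ ((2:ℝ)/3 - 1) = w⁻¹ := by
        rw [show (2:ℝ)/3 - 1 = -(1/3) by norm_num, Real.rpow_neg huθ.le]
      have hZ1' : Z - 1 ≠ 0 := sub_ne_zero.2 hZ1
      have hw0 : w ≠ 0 := hwpos.ne'
      have hD0 : D ≠ 0 := hDpos.ne'
      have hstep : -a / D + 3 * σ ^ 2 * ((2:ℕ) * R ^ 1 * (-a / D))
            + c * (((1 - Z) * ((3:ℕ) * R ^ 2 * (-a / D))) * ((2:ℝ)/3) * w⁻¹)
            + a * 1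
          = (-a / D) * (1 + 6 * σ ^ 2 * (R - R ^ 2 / w)) + a := by
        rw [hc]
        field_simp
        ring
      rw [hum, hstep, ← hD, div_mul_cancel₀ _ hD0]
      ring
    rw [hval] at hsum
    exact hsum
  have hcont : ContinuousOn F (Set.Icc 0 T) := fun θ hθ =>
    (key θ hθ).continuousAt.continuousWithinAt
  have hconst : ∀ θ ∈ Set.Icc (0:ℝ) T, F θ = F 0 :=
    constant_of_has_deriv_right_zero hcont
      (fun x hx => (key x (Set.Ico_subset_Icc_self hx)).hasDerivWithinAt)
  intro θ hθ
  have := hconst θ hθ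
  have hF0 : F 0 = 1 + 3 * σ ^ 2 + c := by
    simp only [hF, hr0]
    norm_num
  rw [hF0] at this
  simp only [hF] at this
  linarith
end

section
/- Let a > 0 and Ψ > 0 be real constants and define b : [0, ∞) → ℝ by b(θ) = exp((1 − (1 + Ψ·a·θ/2)²)/Ψ). Then b(0) = 1, 0 < b(θ) ≤ 1 for all θ ≥ 0, the quantity 1 − Ψ·ln b(θ) = (1 + Ψ·a·θ/2)² is nonnegative, and b satisfies b'(θ) = −a·b(θ)·√(1 − Ψ·ln b(θ)) for all θ ≥ 0. -/
open Real Set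

/-- Random pore model without product layer resistance (β = 0):
`b θ = exp((1 - (1 + Ψaθ/2)²)/Ψ)` solves `b' = -a b √(1 - Ψ ln b)` with
`b 0 = 1`. -/
theorem stmt8 (a Ψ : ℝ) (ha : 0 < a) (hΨ : 0 < Ψ)
    (b : ℝ → ℝ)
    (hb : ∀ θ, b θ = Real.exp ((1 - (1 + Ψ * a * θ / 2) ^ 2) / Ψ)) :
    b 0 = 1 ∧
    (∀ θ : ℝ, 0 ≤ θ → 0 < b θ ∧ b θ ≤ 1) ∧
    (∀ θ : ℝ, 0 ≤ θ →
      1 - Ψ * Real.log (b θ) = (1 + Ψ * a * θ / 2) ^ 2 ∧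
      0 ≤ 1 - Ψ * Real.log (b θ)) ∧
    (∀ θ : ℝ, 0 ≤ θ →
      deriv b θ = -a * b θ * Real.sqrt (1 - Ψ * Real.log (b θ))) := by
  have hlog : ∀ θ : ℝ, Real.log (b θ) = (1 - (1 + Ψ * a * θ / 2) ^ 2) / Ψ := by
    intro θ; rw [hb θ, Real.log_exp]
  have hkey : ∀ θ : ℝ, 1 - Ψ * Real.log (b θ) = (1 + Ψ * a * θ / 2) ^ 2 := by
    intro θ; rw [hlog θ]; field_simp; ring
  have hpos : ∀ θ : ℝ, 0 ≤ θ → 0 ≤ 1 + Ψ * a * θ / 2 := by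
    intro θ hθ; positivity
  refine ⟨?_, ?_, ?_, ?_⟩
  · rw [hb 0]; norm_num
  · intro θ hθ
    refine ⟨by rw [hb θ]; exact Real.exp_pos _, ?_⟩
    rw [hb θ]
    have h1 : (1:ℝ) ≤ (1 + Ψ * a * θ / 2) ^ 2 := by nlinarith [mul_nonneg (mul_nonneg hΨ.le ha.le) hθ, sq_nonneg (Ψ * a * θ / 2)]
    calc Real.exp ((1 - (1 + Ψ * a * θ / 2) ^ 2) / Ψ) ≤ Real.exp 0 := by
          apply Real.exp_le_exp.2
          apply div_nonpos_of_nonpos_of_nonneg (by linarith) hΨ.le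
      _ = 1 := Real.exp_zero
  · intro θ hθ
    exact ⟨hkey θ, (hkey θ) ▸ sq_nonneg _⟩
  · intro θ hθ
    have hd : HasDerivAt b (b θ * (-a * (1 + Ψ * a * θ / 2))) θ := by
      have h1 : HasDerivAt (fun θ : ℝ => (1 - (1 + Ψ * a * θ / 2) ^ 2) / Ψ)
          (-a * (1 + Ψ * a * θ / 2)) θ := by
        have h2 : HasDerivAt (fun θ : ℝ => 1 + Ψ * a * θ / 2) (Ψ * a / 2) θ := by
          simpa using (((hasDerivAt_id θ).const_mul (Ψ * a)).div_const 2).const_add 1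
        have h3 := ((h2.pow 2).const_sub 1).div_const Ψ
        refine h3.congr_deriv ?_
        field_simp
        ring
      have h4 := (h1.exp.congr_of_eventuallyEq
        (Filter.Eventually.of_forall fun x => (hb x)))
      refine h4.congr_deriv ?_
      rw [hb θ]
      try ring
    rw [hd.deriv, hkey θ, Real.sqrt_sq (hpos θ hθ)]
    ring
end

section
/- Let a > 0, Ψ > 0, β ≥ 0 and Z ≥ 0 be real constants, set c = β·Z/Ψ, let T > 0, and suppose b : [0, T] → (0, 1] is differentiable with b(0) = 1 and b'(θ) = −a·b(θ)·√(1 − Ψ·ln b(θ)) / (1 + c·(√(1 − Ψ·ln b(θ)) − 1)) for all θ ∈ [0, T]. Then the denominator 1 + c·(√(1 − Ψ·ln b(θ)) − 1) ≥ 1 for all θ, and for all θ ∈ [0, T]: (2/Ψ)·(1 − c)·(1 − √(1 − Ψ·ln b(θ))) + c·ln b(θ) = −a·θ. -/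
open Real Set

/-- Random pore model with product layer resistance: the implicit integrated
form of `b' = -a b √(1 - Ψ ln b) / (1 + c(√(1 - Ψ ln b) - 1))`, `b 0 = 1`,
with `c = βZ/Ψ`, is `(2/Ψ)(1-c)(1 - √(1 - Ψ ln b)) + c ln b = -aθ`. -/
theorem stmt9 (a Ψ β Z c T : ℝ) (ha : 0 < a) (hΨ : 0 < Ψ) (hβ : 0 ≤ β)
    (hZ : 0 ≤ Z) (hc : c = β * Z / Ψ) (hT : 0 < T)
    (b : ℝ → ℝ)
    (hrange : ∀ θ ∈ Set.Icc (0:ℝ) T, b θ ∈ Set.Ioc (0:ℝ) 1)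
    (hb0 : b 0 = 1)
    (hderiv : ∀ θ ∈ Set.Icc (0:ℝ) T,
      HasDerivAt b
        (-a * b θ * Real.sqrt (1 - Ψ * Real.log (b θ)) /
          (1 + c * (Real.sqrt (1 - Ψ * Real.log (b θ)) - 1))) θ) :
    (∀ θ ∈ Set.Icc (0:ℝ) T,
      1 ≤ 1 + c * (Real.sqrt (1 - Ψ * Real.log (b θ)) - 1)) ∧
    (∀ θ ∈ Set.Icc (0:ℝ) T,
      (2 / Ψ) * (1 - c) * (1 - Real.sqrt (1 - Ψ * Real.log (b θ)))
        + c * Real.log (b θ) = -a * θ) := by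
  have hc0 : 0 ≤ c := by rw [hc]; positivity
  have key : ∀ θ ∈ Set.Icc (0:ℝ) T, 1 ≤ Real.sqrt (1 - Ψ * Real.log (b θ)) := by
    intro θ hθ
    have h1 : Real.log (b θ) ≤ 0 := Real.log_nonpos (hrange θ hθ).1.le (hrange θ hθ).2
    have h2 : (1:ℝ) ≤ 1 - Ψ * Real.log (b θ) := by nlinarith
    calc (1:ℝ) = Real.sqrt 1 := Real.sqrt_one.symm
      _ ≤ _ := Real.sqrt_le_sqrt h2
  have hden : ∀ θ ∈ Set.Icc (0:ℝ) T,
      1 ≤ 1 + c * (Real.sqrt (1 - Ψ * Real.log (b θ)) - 1) := by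
    intro θ hθ; nlinarith [key θ hθ]
  refine ⟨hden, ?_⟩
  set F : ℝ → ℝ := fun t =>
    (2 / Ψ) * (1 - c) * (1 - Real.sqrt (1 - Ψ * Real.log (b t)))
      + c * Real.log (b t) + a * t with hF_def
  have hF : ∀ θ ∈ Set.Icc (0:ℝ) T, HasDerivAt F 0 θ := by
    intro θ hθ
    have hbpos : 0 < b θ := (hrange θ hθ).1
    have hbne : b θ ≠ 0 := hbpos.ne'
    have hs1 : 1 ≤ Real.sqrt (1 - Ψ * Real.log (b θ)) := key θ hθ
    have hsne : Real.sqrt (1 - Ψ * Real.log (b θ)) ≠ 0 := by linarith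
    have hD : (1 : ℝ) ≤ 1 + c * (Real.sqrt (1 - Ψ * Real.log (b θ)) - 1) := hden θ hθ
    have hDne : 1 + c * (Real.sqrt (1 - Ψ * Real.log (b θ)) - 1) ≠ 0 := by linarith
    have hfne : 1 - Ψ * Real.log (b θ) ≠ 0 := by
      have := Real.sqrt_eq_zero' (x := 1 - Ψ * Real.log (b θ))
      intro h; rw [h, Real.sqrt_zero] at hs1; linarith
    have h1 := hderiv θ hθ
    have h2 : HasDerivAt (fun t => Real.log (b t))
        ((-a * b θ * Real.sqrt (1 - Ψ * Real.log (b θ)) /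
          (1 + c * (Real.sqrt (1 - Ψ * Real.log (b θ)) - 1))) / b θ) θ := h1.log hbne
    have h3 : HasDerivAt (fun t => 1 - Ψ * Real.log (b t))
        (-(Ψ * ((-a * b θ * Real.sqrt (1 - Ψ * Real.log (b θ)) /
          (1 + c * (Real.sqrt (1 - Ψ * Real.log (b θ)) - 1))) / b θ))) θ :=
      (h2.const_mul Ψ).const_sub 1
    have h4 := h3.sqrt hfne
    have h5 := ((h4.const_sub 1).const_mul ((2 / Ψ) * (1 - c))).add (h2.const_mul c)
    have h6 := h5.add ((hasDerivAt_id θ).const_mul a)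
    have heq : (2 / Ψ) * (1 - c) *
          -(-(Ψ * ((-a * b θ * Real.sqrt (1 - Ψ * Real.log (b θ)) /
            (1 + c * (Real.sqrt (1 - Ψ * Real.log (b θ)) - 1))) / b θ)) /
            (2 * Real.sqrt (1 - Ψ * Real.log (b θ))))
        + c * ((-a * b θ * Real.sqrt (1 - Ψ * Real.log (b θ)) /
            (1 + c * (Real.sqrt (1 - Ψ * Real.log (b θ)) - 1))) / b θ)
        + a * 1 = 0 := by
      field_simp
      ring
    rw [heq] at h6
    exact h6
  have hcont : ContinuousOn F (Set.Icc 0 T) := fun θ hθ =>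
    ((hF θ hθ).continuousAt).continuousWithinAt
  have hconst : ∀ θ ∈ Set.Icc (0:ℝ) T, F θ = F 0 :=
    constant_of_has_deriv_right_zero hcont
      (fun x hx => (hF x (Set.Ico_subset_Icc_self hx)).hasDerivWithinAt)
  intro θ hθ
  have h := hconst θ hθ
  have hF0 : F 0 = 0 := by
    simp [hF_def, hb0, Real.log_one, Real.sqrt_one]
  rw [hF0] at h
  simp only [hF_def] at h
  linarith
end

section
/- Let ψ_A > 0 and ψ_C > 0 be real constants, set s = ψ_A + ψ_C, and define b(θ) = exp(−s·θ) and b_A(θ) = 1 − (ψ_A/s)·(1 − exp(−s·θ)). Then for all θ > 0: b_A(θ) − b(θ) > 0 and (1 − b_A(θ)) / (b_A(θ) − b(θ)) = ψ_A / ψ_C; in particular the local selectivity is constant in time. -/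
open Real Set

/-- Simultaneous reactions of one porous solid with two gases A and C: the
local selectivity `(1 - b_A)/(b_A - b)` is constant in time and equals
`ψ_A/ψ_C`. -/
theorem stmt11 (ψA ψC s : ℝ) (hψA : 0 < ψA) (hψC : 0 < ψC)
    (hs : s = ψA + ψC)
    (b bA : ℝ → ℝ)
    (hb : ∀ θ, b θ = Real.exp (-s * θ))
    (hbA : ∀ θ, bA θ = 1 - (ψA / s) * (1 - Real.exp (-s * θ))) :
    ∀ θ : ℝ, 0 < θ →
      0 < bA θ - b θ ∧ (1 - bA θ) / (bA θ - b θ) = ψA / ψC := by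
  intro θ hθ
  have hs0 : 0 < s := by rw [hs]; linarith
  have he : Real.exp (-s * θ) < 1 := by
    rw [Real.exp_lt_one_iff]; nlinarith
  set e := Real.exp (-s * θ) with he_def
  have h1 : 0 < 1 - e := by linarith
  have hdiff : bA θ - b θ = (ψC / s) * (1 - e) := by
    rw [hbA, hb, ← he_def]
    field_simp
    ring_nf
    nlinarith [hs0]
  have hnum : 1 - bA θ = (ψA / s) * (1 - e) := by
    rw [hbA, ← he_def]; ring
  constructor
  · rw [hdiff]; positivity
  · rw [hnum, hdiff]
    rw [mul_div_mul_right _ _ (ne_of_gt h1)]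
    field_simp
end

section
/- Let Pe > 0, β > 0, Λ > 0 and a_s ∈ ℝ be real constants. Set r₁ = (Pe + √(Pe² + 4β))/2, r₂ = (Pe − √(Pe² + 4β))/2, E = exp((r₂ − r₁)·Λ), and D = Pe − Pe·(r₂/r₁)·E − r₂ + r₂·E. Then r₁ > 0 > r₂, D > 0, and the function Y(η) = (Pe·(1 − a_s)/D)·(exp(r₂·η) − (r₂/r₁)·E·exp(r₁·η)) + a_s satisfies: (i) Y''(η) − Pe·Y'(η) = β·(Y(η) − a_s) for all η ∈ ℝ; (ii) the Danckwerts inlet condition Y(0) − (1/Pe)·Y'(0) = 1; and (iii) the outlet condition Y'(Λ) = 0. -/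
open Real Set

private lemma expAux (c η : ℝ) : HasDerivAt (fun x => Real.exp (c * x)) (c * Real.exp (c * η)) η := by
  have h := ((hasDerivAt_id η).const_mul c).exp
  simpa [mul_comm] using h

/-- Quantized-method bulk gas concentration profile for a first-order gas–solid
reaction in a packed bed with axial dispersion: `Y` satisfies the axial
dispersion equation with Danckwerts inlet condition and zero outlet gradient. -/
theorem stmt12 (Pe β Λ aₛ : ℝ) (hPe : 0 < Pe) (hβ : 0 < β) (hΛ : 0 < Λ)
    (r₁ r₂ E D : ℝ)
    (hr₁ : r₁ = (Pe + Real.sqrt (Pe ^ 2 + 4 * β)) / 2)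
    (hr₂ : r₂ = (Pe - Real.sqrt (Pe ^ 2 + 4 * β)) / 2)
    (hE : E = Real.exp ((r₂ - r₁) * Λ))
    (hD : D = Pe - Pe * (r₂ / r₁) * E - r₂ + r₂ * E)
    (Y : ℝ → ℝ)
    (hY : ∀ η, Y η = (Pe * (1 - aₛ) / D) *
        (Real.exp (r₂ * η) - (r₂ / r₁) * E * Real.exp (r₁ * η)) + aₛ) :
    (0 < r₁ ∧ r₂ < 0) ∧
    0 < D ∧
    (∀ η : ℝ, deriv (deriv Y) η - Pe * deriv Y η = β * (Y η - aₛ)) ∧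
    Y 0 - (1 / Pe) * deriv Y 0 = 1 ∧
    deriv Y Λ = 0 := by
  set s := Real.sqrt (Pe ^ 2 + 4 * β) with hs
  have hs2 : s ^ 2 = Pe ^ 2 + 4 * β := Real.sq_sqrt (by positivity)
  have hsnn : 0 ≤ s := Real.sqrt_nonneg _
  have hsPe : Pe < s := by nlinarith
  have hr1pos : 0 < r₁ := by rw [hr₁]; linarith
  have hr2neg : r₂ < 0 := by rw [hr₂]; linarith
  have hr1ne : r₁ ≠ 0 := ne_of_gt hr1pos
  have hq1 : r₁ ^ 2 = Pe * r₁ + β := by rw [hr₁]; nlinarith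
  have hq2 : r₂ ^ 2 = Pe * r₂ + β := by rw [hr₂]; nlinarith
  have hr12 : r₁ * r₂ = -β := by rw [hr₁, hr₂]; nlinarith
  have hEpos : 0 < E := by rw [hE]; exact Real.exp_pos _
  have hElt1 : E < 1 := by
    rw [hE]
    have : (r₂ - r₁) * Λ < 0 := by
      apply mul_neg_of_neg_of_pos _ hΛ
      rw [hr₁, hr₂]; linarith
    simpa using Real.exp_lt_one_iff.mpr this
  have hDr1 : D * r₁ = Pe * (r₁ - E * r₂) + β * (1 - E) := by
    rw [hD]; field_simp; nlinarith [hr12]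
  have hDpos : 0 < D := by
    have h1 : 0 < Pe * (r₁ - E * r₂) + β * (1 - E) := by nlinarith
    nlinarith [hDr1]
  have hDne : D ≠ 0 := ne_of_gt hDpos
  -- derivatives
  set C := Pe * (1 - aₛ) / D with hC
  set K := r₂ / r₁ * E with hK
  have hYfun : Y = fun η => C * (Real.exp (r₂ * η) - K * Real.exp (r₁ * η)) + aₛ := by
    funext η; rw [hY η]
  have hYd : ∀ η, HasDerivAt Y (C * (r₂ * Real.exp (r₂ * η) - K * (r₁ * Real.exp (r₁ * η)))) η := by
    intro η
    rw [hYfun]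
    exact (((expAux r₂ η).sub ((expAux r₁ η).const_mul K)).const_mul C).add_const aₛ
  have hderiv : deriv Y = fun η => C * (r₂ * Real.exp (r₂ * η) - K * (r₁ * Real.exp (r₁ * η))) := by
    funext η; exact (hYd η).deriv
  have hYd2 : ∀ η, HasDerivAt (deriv Y)
      (C * (r₂ * (r₂ * Real.exp (r₂ * η)) - K * (r₁ * (r₁ * Real.exp (r₁ * η))))) η := by
    intro η
    rw [hderiv]
    exact ((((expAux r₂ η).const_mul r₂).sub
      (((expAux r₁ η).const_mul r₁).const_mul K)).const_mul C)
  have hderiv2 : ∀ η, deriv (deriv Y) η =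
      C * (r₂ * (r₂ * Real.exp (r₂ * η)) - K * (r₁ * (r₁ * Real.exp (r₁ * η)))) := by
    intro η; exact (hYd2 η).deriv
  refine ⟨⟨hr1pos, hr2neg⟩, hDpos, ?_, ?_, ?_⟩
  · intro η
    rw [hderiv2 η, hderiv, hY η]
    simp only
    have e2 := Real.exp_pos (r₂ * η)
    linear_combination (C * Real.exp (r₂ * η)) * hq2 - (C * K * Real.exp (r₁ * η)) * hq1
  · rw [hY 0, hderiv]
    simp only [mul_zero, Real.exp_zero, mul_one]
    have hKr : K * r₁ = r₂ * E := by rw [hK]; field_simp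
    have hCD : C * D = Pe * (1 - aₛ) := by rw [hC]; field_simp
    have hD' : D = Pe - Pe * K - r₂ + K * r₁ := by rw [hD, hKr, hK]; ring
    have hPne : Pe ≠ 0 := ne_of_gt hPe
    field_simp
    linear_combination hCD - C * hD'
  · rw [hderiv]
    simp only
    have hEexp : E * Real.exp (r₁ * Λ) = Real.exp (r₂ * Λ) := by
      rw [hE, ← Real.exp_add]; ring_nf
    have hKr : K * (r₁ * Real.exp (r₁ * Λ)) = r₂ * Real.exp (r₂ * Λ) := by
      rw [hK]; field_simp; rw [← hEexp]; ring
    rw [hKr]; ring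
end
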